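/- Let T be any family with T j : Fin (n j) → ℝ and define the shifted tensor A_T by A_T(α) = A(α) + ∑_{j : Fin d} T j (α j). If S is a canonical shifting solution (for subtensor dimension k = d − 1) for (A, Ω), then the family S + T (defined by (S + T) j v = S j v + T j v) is a canonical shifting solution for (A_T, Ω), and the imputed value it determines at each α ∉ Ω equals the imputed value determined by S for (A, Ω) plus ∑_{j : Fin d} T j (α j). (Shift consistency: SCCA(T ⊖ A, d−1) = T ⊖ SCCA(A, d−1).) -/

import Mathlib

open Finset

/-- `S` is a canonical shifting solution (subtensor dimension `k = d - 1`) for `(A, Ω)`: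
for every dimension `j` and coordinate `v` whose known slice is nonempty, the sum of the
shifted tensor `A'(α) = A(α) - ∑ j', S j' (α j')` over that slice is zero. -/
def IsCSS {d : ℕ} {n : Fin d → ℕ} (A : (∀ j, Fin (n j)) → ℝ)
    (Ω : Finset (∀ j, Fin (n j))) (S : ∀ j, Fin (n j) → ℝ) : Prop :=
  ∀ (j : Fin d) (v : Fin (n j)),
    (Ω.filter (fun α => α j = v)).Nonempty →
    ∑ α ∈ Ω.filter (fun α => α j = v), (A α - ∑ j', S j' (α j')) = 0

/-- `α` (an unknown entry) is fully supported w.r.t. `Ω`: there is `β` differing from `α`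
in every coordinate such that every mixed vertex of the hypercube spanned by `α` and `β`,
other than `α` itself, is a known entry. -/
def FullySupported {d : ℕ} {n : Fin d → ℕ} (Ω : Finset (∀ j, Fin (n j)))
    (α : ∀ j, Fin (n j)) : Prop :=
  ∃ β : ∀ j, Fin (n j), (∀ j, β j ≠ α j) ∧
    ∀ α' : ∀ j, Fin (n j), (∀ j, α' j = α j ∨ α' j = β j) → α' ≠ α → α' ∈ Ω

/-- Shift consistency of SCCA: if `S` solves the canonical shifting problem for `(A, Ω)`,
then `S + T` solves it for the shifted tensor `A_T(α) = A(α) + ∑ j, T j (α j)`, and the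
imputed value of `S + T` at each unknown entry is the imputed value of `S` plus the shift. -/
theorem scca_shift_consistent {d : ℕ} (hd : 1 ≤ d) {n : Fin d → ℕ} (hn : ∀ j, 0 < n j)
    (A : (∀ j, Fin (n j)) → ℝ) (Ω : Finset (∀ j, Fin (n j)))
    (S T : ∀ j, Fin (n j) → ℝ) (hS : IsCSS A Ω S) :
    IsCSS (fun α => A α + ∑ j, T j (α j)) Ω (fun j v => S j v + T j v) ∧
      ∀ α, α ∉ Ω →
        ∑ j, (S j (α j) + T j (α j)) = (∑ j, S j (α j)) + ∑ j, T j (α j) := by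
  constructor
  · intro j v hne
    have := hS j v hne
    simpa [Finset.sum_add_distrib, sub_add_eq_sub_sub, add_sub_assoc, ← sub_eq_add_neg] using this
  · intro α _
    exact Finset.sum_add_distrib
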